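/- Let G be a group and N ≥ 1 a natural number. Suppose that every product of 2N commutators [x,y] = x y x⁻¹ y⁻¹ of elements of G is equal to a product of N commutators of elements of G. Then the set of all products of at most N commutators of elements of G is a subgroup of G and equals the commutator subgroup [G,G]. -/

import Mathlib

open FirstOrder
open scoped commutatorElement

/-- The function symbols of the first-order language of groups:
multiplication, inverse, and identity. -/
inductive GroupFunc : ℕ → Type
  | mul : GroupFunc 2
  | inv : GroupFunc 1
  | one : GroupFunc 0

/-- The first-order language of groups. -/
def groupLang : FirstOrder.Language :=
  { Functions := GroupFunc, Relations := fun _ => Empty }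

/-- Any group is a structure for the language of groups in the natural way. -/
instance groupLangStructure (G : Type*) [Group G] : groupLang.Structure G where
  funMap {_} f v :=
    match f with
    | GroupFunc.mul => v 0 * v 1
    | GroupFunc.inv => (v 0)⁻¹
    | GroupFunc.one => 1
  RelMap {_} r := r.elim

/-- Two groups are elementarily equivalent in the first-order language of groups
if they satisfy exactly the same first-order sentences of the group language. -/
def GroupElemEquiv (G H : Type*) [Group G] [Group H] : Prop :=
  groupLang.ElementarilyEquivalent G H

/-- Two rings are elementarily equivalent in the first-order language of rings
if they satisfy exactly the same first-order sentences of the ring language. -/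
def RingElemEquiv (R S : Type*) [Ring R] [Ring S] : Prop :=
  letI := FirstOrder.Ring.compatibleRingOfRing R
  letI := FirstOrder.Ring.compatibleRingOfRing S
  FirstOrder.Language.ring.ElementarilyEquivalent R S

/-- `g` is a product of at most `N` commutators of elements of `G`. -/
def IsProdOfAtMostNCommutators {G : Type*} [Group G] (N : ℕ) (g : G) : Prop :=
  ∃ l : List (G × G), l.length ≤ N ∧ g = (l.map fun q => ⁅q.1, q.2⁆).prod

/-- If every product of `2N` commutators of elements of a group `G` is equal to a product of
`N` commutators, then the set of products of at most `N` commutators is a subgroup of `G`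
and equals the commutator subgroup `[G,G]`. -/
theorem prodOfAtMostNCommutators_eq_commutator
    (G : Type) [Group G] (N : ℕ) (hN : 1 ≤ N)
    (h : ∀ l : List (G × G), l.length = 2 * N →
      ∃ l' : List (G × G), l'.length = N ∧
        (l.map fun q => ⁅q.1, q.2⁆).prod = (l'.map fun q => ⁅q.1, q.2⁆).prod) :
    ∃ H : Subgroup G, (H : Set G) = {g : G | IsProdOfAtMostNCommutators N g} ∧
      H = commutator G := by
  -- Any product of at most N commutators is a product of exactly N commutators (pad with 1's).
  have pad : ∀ g : G, IsProdOfAtMostNCommutators N g →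
      ∃ l : List (G × G), l.length = N ∧ g = (l.map fun q => ⁅q.1, q.2⁆).prod := by
    rintro g ⟨l, hl, rfl⟩
    refine ⟨l ++ List.replicate (N - l.length) (1, 1), by simp; omega, ?_⟩
    simp [List.map_replicate]
  have inv_mem : ∀ g : G, IsProdOfAtMostNCommutators N g →
      IsProdOfAtMostNCommutators N g⁻¹ := by
    rintro g ⟨l, hl, rfl⟩
    refine ⟨(l.map Prod.swap).reverse, by simpa using hl, ?_⟩
    rw [List.prod_inv_reverse]
    simp [Function.comp_def, List.map_reverse]
  have mul_mem : ∀ g₁ g₂ : G, IsProdOfAtMostNCommutators N g₁ →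
      IsProdOfAtMostNCommutators N g₂ → IsProdOfAtMostNCommutators N (g₁ * g₂) := by
    intro g₁ g₂ h₁ h₂
    obtain ⟨l₁, hl₁, rfl⟩ := pad _ h₁
    obtain ⟨l₂, hl₂, rfl⟩ := pad _ h₂
    obtain ⟨l', hl', hprod⟩ := h (l₁ ++ l₂) (by simp [hl₁, hl₂]; ring)
    exact ⟨l', hl'.le, by simpa using hprod⟩
  refine ⟨{ carrier := {g : G | IsProdOfAtMostNCommutators N g}
            one_mem' := ⟨[], by simp⟩
            mul_mem' := fun ha hb => mul_mem _ _ ha hb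
            inv_mem' := fun ha => inv_mem _ ha }, rfl, ?_⟩
    <;> try rfl
  apply le_antisymm
  · rintro g ⟨l, hl, rfl⟩
    apply Subgroup.list_prod_mem
    intro x hx
    simp only [List.mem_map] at hx
    obtain ⟨q, _, rfl⟩ := hx
    exact Subgroup.commutator_mem_commutator (Subgroup.mem_top _) (Subgroup.mem_top _)
  · rw [commutator_eq_closure]
    apply Subgroup.closure_le _ |>.mpr
    rintro x ⟨a, b, rfl⟩
    exact ⟨[(a, b)], by simpa using hN, by simp⟩
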